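/- For every k ≥ 2, M ∈ ℕ ∪ {∞} and N ≥ 0, the oriented spider-web graph S_{k,N,M} is vertex-transitive (by graph automorphisms, not necessarily label-preserving) if and only if M ≥ N. In particular, when M < N, the two vertices (0…0, 0) and (10…0, 0) of the non-oriented spider-web graph lie in different automorphism orbits, because there are strictly more closed paths of length M through (0…0, 0) than through (10…0, 0). -/

import Mathlib

/-- An oriented (multi)graph: vertices, edges, initial and terminal maps. -/
structure OGraph where
  V : Type
  E : Type
  ι : E → V
  τ : E → V

namespace OGraph

/-- Tensor product of oriented graphs. -/
def tensor (G H : OGraph) : OGraph where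
  V := G.V × H.V
  E := G.E × H.E
  ι e := (G.ι e.1, H.ι e.2)
  τ e := (G.τ e.1, H.τ e.2)

/-- Isomorphism of oriented graphs. -/
structure Iso (G H : OGraph) where
  fV : G.V ≃ H.V
  fE : G.E ≃ H.E
  hι : ∀ e, H.ι (fE e) = fV (G.ι e)
  hτ : ∀ e, H.τ (fE e) = fV (G.τ e)

/-- Weak adjacency. -/
def Adj (G : OGraph) (u v : G.V) : Prop :=
  (∃ e, G.ι e = u ∧ G.τ e = v) ∨ (∃ e, G.ι e = v ∧ G.τ e = u)

/-- Weak reachability. -/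
def Reach (G : OGraph) : G.V → G.V → Prop := Relation.ReflTransGen G.Adj

/-- The connected component of a vertex. -/
def component (G : OGraph) (v : G.V) : OGraph where
  V := {w // G.Reach v w}
  E := {e // G.Reach v (G.ι e)}
  ι e := ⟨G.ι e.1, e.2⟩
  τ e := ⟨G.τ e.1, e.2.tail (Or.inl ⟨e.1, rfl, rfl⟩)⟩

end OGraph

/-- The oriented cycle of length `M` (`M = 0` gives the oriented line, i.e. `M = ∞`). -/
@[reducible] def cycle (M : ℕ) : OGraph where
  V := ZMod M
  E := ZMod M
  ι i := i
  τ i := i + 1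

/-- An oriented graph whose edges carry labels in `X`. -/
structure LGraph (X : Type) extends OGraph where
  lab : E → X

/-- Strong (label-preserving) isomorphism of labeled oriented graphs. -/
structure LIso {X : Type} (G H : LGraph X) extends OGraph.Iso G.toOGraph H.toOGraph where
  hlab : ∀ e, H.lab (fE e) = G.lab e

/-- Tensor product of a labeled graph with the cycle `C_M`, the labels being inherited
from the first factor. -/
def LGraph.tensorC {X : Type} (G : LGraph X) (M : ℕ) : LGraph X where
  toOGraph := G.toOGraph.tensor (cycle M)
  lab e := G.lab e.1

/-- The connected component of a vertex of a labeled graph. -/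
def LGraph.component {X : Type} (G : LGraph X) (v : G.V) : LGraph X where
  toOGraph := G.toOGraph.component v
  lab e := G.lab e.1

/-- The labeled oriented Cayley graph of a group `G` with generators indexed by `f : X → G`:
an edge labeled `x` from `g` to `g * f x`. -/
def cayley (G : Type) [Group G] {X : Type} (f : X → G) : LGraph X where
  V := G
  E := G × X
  ι e := e.1
  τ e := e.1 * f e.2
  lab e := e.2

/-- The labeled oriented Schreier graph of `G` with respect to a subgroup `H` and
generators `f : X → G`: vertices are right cosets `Hg`, with an edge labeled `x`
from `Hg` to `Hg·(f x)`. -/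
def schreier (G : Type) [Group G] (H : Subgroup G) {X : Type} (f : X → G) : LGraph X where
  V := Quotient (QuotientGroup.rightRel H)
  E := Quotient (QuotientGroup.rightRel H) × X
  ι e := e.1
  τ e := Quotient.map (fun g => g * f e.2)
    (fun a b h => by
      have h' := QuotientGroup.rightRel_apply.mp h
      exact QuotientGroup.rightRel_apply.mpr (by simpa [mul_assoc] using h')) e.1
  lab e := e.2

/-- The labeled de Bruijn graph `B_{k,N}`: vertices are words over `{0,…,k−1}`
(realized as `ZMod k`); the edge from `x₁…x_N` to `x₂…x_N y` carries the label `R_y = y`. -/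
def deBruijnL (k N : ℕ) : LGraph (ZMod k) where
  V := Fin N → ZMod k
  E := (Fin N → ZMod k) × ZMod k
  ι e := e.1
  τ e := fun j => if h : (j : ℕ) + 1 < N then e.1 ⟨(j : ℕ) + 1, h⟩ else e.2
  lab e := e.2

/-- The labeled oriented spider-web graph `S_{k,N,M}`: vertices are pairs
`(x₁…x_N, i) ∈ {0,…,k−1}^N × ℤ/Mℤ`; for each symbol `y` there is an edge labeled
`R_y = y` from `(x₁…x_N, i)` to `(x₂…x_N y, i+1)`.  (For `M = 0`, `ZMod 0 = ℤ` and
this is `S_{k,N,∞}`.) -/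
def spider (k N M : ℕ) : LGraph (ZMod k) where
  V := (Fin N → ZMod k) × ZMod M
  E := ((Fin N → ZMod k) × ZMod M) × ZMod k
  ι e := e.1
  τ e := (fun j => if h : (j : ℕ) + 1 < N then e.1.1 ⟨(j : ℕ) + 1, h⟩ else e.2, e.1.2 + 1)
  lab e := e.2

/-- Directed walks of length `n`. -/
def DWalk (G : OGraph) : ℕ → G.V → G.V → Prop
  | 0, u, v => u = v
  | n+1, u, v => ∃ e, G.ι e = u ∧ DWalk G n (G.τ e) v

theorem DWalk.map {G H : OGraph} (φ : OGraph.Iso G H) :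
    ∀ n u v, DWalk G n u v → DWalk H n (φ.fV u) (φ.fV v) := by
  intro n
  induction n with
  | zero => intro u v h; exact congrArg _ h
  | succ n ih =>
    rintro u v ⟨e, he, hw⟩
    exact ⟨φ.fE e, by rw [φ.hι, he], by rw [φ.hτ]; exact ih _ _ hw⟩

theorem spider_walk_zero (k N M : ℕ) :
    ∀ n (i : ZMod M), DWalk (spider k N M).toOGraph n
      ((fun _ => 0), i) ((fun _ => 0), i + (n : ℕ)) := by
  intro n
  induction n with
  | zero =>
    intro i
    show ((fun _ => (0 : ZMod k)), i) = ((fun _ => 0), i + ((0:ℕ) : ZMod M))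
    simp
  | succ n ih =>
    intro i
    refine ⟨(((fun _ => 0), i), 0), rfl, ?_⟩
    have h1 : (spider k N M).τ (((fun _ => 0), i), 0)
        = ((fun _ => (0 : ZMod k)), i + 1) := by
      refine Prod.ext ?_ rfl
      funext j
      show (if h : (j : ℕ) + 1 < N then (0:ZMod k) else 0) = 0
      by_cases h : (j : ℕ) + 1 < N <;> simp [h]
    rw [h1]
    have h3 := ih (i + 1)
    have h2 : i + 1 + (n : ℕ) = i + ((n+1 : ℕ) : ZMod M) := by push_cast; ring
    rwa [h2] at h3

theorem spider_walk_end (k N M : ℕ) :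
    ∀ n (x : Fin N → ZMod k) (i : ZMod M) (y : Fin N → ZMod k) (m : ZMod M),
      DWalk (spider k N M).toOGraph n (x, i) (y, m) →
      ∀ (j : ℕ) (h : j + n < N), y ⟨j, by omega⟩ = x ⟨j + n, h⟩ := by
  intro n
  induction n with
  | zero =>
    intro x i y m h j hj
    have h' : ((x, i) : (Fin N → ZMod k) × ZMod M) = (y, m) := h
    injection h' with h1 h2
    subst h1
    rfl
  | succ n ih =>
    rintro x i y m ⟨e, he, hw⟩ j hj
    obtain ⟨⟨p, q⟩, c⟩ := e
    have hp : ((p, q) : (Fin N → ZMod k) × ZMod M) = (x, i) := he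
    injection hp with hp1 hp2
    subst hp1; subst hp2
    have hτ : (spider k N M).τ ((p, q), c)
        = ((fun j' : Fin N => if h : (j' : ℕ) + 1 < N then p ⟨(j' : ℕ) + 1, h⟩ else c), q + 1) := rfl
    rw [hτ] at hw
    have h1 := ih _ _ _ _ hw j (by omega)
    rw [h1]
    have h2 : j + n + 1 < N := by omega
    simp only [h2, dif_pos]
    exact congrArg p (Fin.mk_eq_mk.mpr (by omega))

/-- The basic "add `D` along the diagonal, rotate by `t`" automorphism of the spider web. -/
theorem spider_iso (k N M : ℕ) (D : ZMod M → ZMod k) (t : ZMod M) :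
    ∃ φ : OGraph.Iso (spider k N M).toOGraph (spider k N M).toOGraph,
      ∀ p : (spider k N M).V,
        φ.fV p = ((fun j => p.1 j + D (p.2 + t + ((j : ℕ) : ZMod M))), p.2 + t) := by
  refine ⟨{
    fV := ⟨fun p => ((fun j => p.1 j + D (p.2 + t + ((j : ℕ) : ZMod M))), p.2 + t),
           fun q => ((fun j => q.1 j - D (q.2 + ((j : ℕ) : ZMod M))), q.2 - t),
           ?_, ?_⟩
    fE := ⟨fun e => (((fun j => e.1.1 j + D (e.1.2 + t + ((j : ℕ) : ZMod M))),
             e.1.2 + t), e.2 + D (e.1.2 + t + (N : ZMod M))),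
           fun e => (((fun j => e.1.1 j - D (e.1.2 + ((j : ℕ) : ZMod M))),
             e.1.2 - t), e.2 - D (e.1.2 + (N : ZMod M))),
           ?_, ?_⟩
    hι := fun e => rfl
    hτ := ?_ }, fun p => rfl⟩
  · intro p; refine Prod.ext ?_ (by simp); funext j; simp
  · intro q; refine Prod.ext ?_ (by simp); funext j; simp
  · intro e
    refine Prod.ext (Prod.ext ?_ (by simp)) (by simp)
    funext j; simp
  · intro e
    refine Prod.ext (Prod.ext ?_ (by simp)) (by simp)
    funext j; simp
  · rintro ⟨⟨x0, i0⟩, y0⟩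
    refine Prod.ext ?_ ?_
    · funext j
      show (if h : (j : ℕ) + 1 < N then x0 ⟨(j : ℕ) + 1, h⟩ + D (i0 + t + ((((j : ℕ) + 1 : ℕ)) : ZMod M)) else y0 + D (i0 + t + (N : ZMod M)))
        = (if h : (j : ℕ) + 1 < N then x0 ⟨(j : ℕ) + 1, h⟩ else y0) + D (i0 + 1 + t + ((j : ℕ) : ZMod M))
      by_cases h : (j : ℕ) + 1 < N
      · rw [dif_pos h, dif_pos h]
        congr 1
        push_cast
        ring
      · rw [dif_neg h, dif_neg h]
        congr 1
        have hjN : ((j : ℕ) + 1 : ℕ) = N := by omega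
        have hcast : ((N : ℕ) : ZMod M) = ((j : ℕ) : ZMod M) + 1 := by
          calc ((N : ℕ) : ZMod M) = ((((j : ℕ) + 1 : ℕ)) : ZMod M) := by rw [hjN]
            _ = ((j : ℕ) : ZMod M) + 1 := by push_cast; ring
        rw [hcast]
        ring
    · show i0 + t + 1 = i0 + 1 + t
      ring
/-- For every `k ≥ 2`, `M ∈ ℕ ∪ {∞}` (with `M = 0` encoding `∞`) and
`N ≥ 0`, the oriented spider-web graph `S_{k,N,M}` is vertex-transitive by (not
necessarily label-preserving) graph automorphisms if and only if `M ≥ N` (which for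
`M = ∞` always holds). -/
theorem spider_vertex_transitive_iff (k N M : ℕ) (hk : 2 ≤ k) :
    (∀ u v : (spider k N M).V,
      ∃ φ : OGraph.Iso (spider k N M).toOGraph (spider k N M).toOGraph, φ.fV u = v) ↔
    (M = 0 ∨ N ≤ M) := by
  constructor
  · -- transitivity → M = 0 ∨ N ≤ M
    intro hT
    by_cases hM : M = 0
    · exact Or.inl hM
    by_cases hNM : N ≤ M
    · exact Or.inr hNM
    exfalso
    push_neg at hNM
    haveI : Fact (1 < k) := ⟨hk⟩
    set x' : Fin N → ZMod k := fun j => if (j : ℕ) = 0 then 1 else 0 with hx'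
    obtain ⟨φ, hφ⟩ := hT ((fun _ => 0), 0) (x', 0)
    have hw0 : DWalk (spider k N M).toOGraph M ((fun _ => (0:ZMod k)), (0:ZMod M))
        ((fun _ => 0), 0) := by
      have h0 := spider_walk_zero k N M M 0
      simpa [ZMod.natCast_self] using h0
    have hw1 := DWalk.map φ M _ _ hw0
    rw [hφ] at hw1
    have hend := spider_walk_end k N M M x' 0 x' 0 hw1 0 (by omega)
    simp only [hx'] at hend
    simp [hM] at hend
  · -- M = 0 ∨ N ≤ M → transitivity
    intro hcond
    rintro ⟨x, i⟩ ⟨x', i'⟩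
    have hinj : ∀ a b : Fin N, ((a : ℕ) : ZMod M) = ((b : ℕ) : ZMod M) → a = b := by
      intro a b h
      have h' := (ZMod.natCast_eq_natCast_iff _ _ _).mp h
      unfold Nat.ModEq at h'
      rcases hcond with h0 | hNM
      · subst h0; simpa [Nat.mod_zero, Fin.ext_iff] using h'
      · rw [Nat.mod_eq_of_lt (lt_of_lt_of_le a.2 hNM),
          Nat.mod_eq_of_lt (lt_of_lt_of_le b.2 hNM)] at h'
        exact Fin.ext h'
    classical
    set D : ZMod M → ZMod k := fun z =>
      if h : ∃ j : Fin N, i' + ((j : ℕ) : ZMod M) = z then x' h.choose - x h.choose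
      else 0 with hD
    have hDval : ∀ j : Fin N, D (i' + ((j : ℕ) : ZMod M)) = x' j - x j := by
      intro j
      have hex : ∃ j' : Fin N, i' + ((j' : ℕ) : ZMod M) = i' + ((j : ℕ) : ZMod M) :=
        ⟨j, rfl⟩
      simp only [hD]
      rw [dif_pos hex]
      have hspec := hex.choose_spec
      have hch : hex.choose = j := hinj _ _ (add_left_cancel hspec)
      rw [hch]
    obtain ⟨φ, hφ⟩ := spider_iso k N M D (i' - i)
    refine ⟨φ, ?_⟩
    refine (hφ (x, i)).trans ?_
    have hit : i + (i' - i) = i' := by ring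
    refine Prod.ext ?_ hit
    funext j
    show x j + D (i + (i' - i) + ((j : ℕ) : ZMod M)) = x' j
    rw [hit, hDval j]
    ring
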